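/- (Validity of the strong screening rule under the unit-slope bound.) Let λ̃ > λ > λ̃/2 > 0. For μ ∈ {λ, λ̃}, let x*(μ) be a minimizer of (1/2)‖Ax − b‖² + μ‖x‖₁ over ℝⁿ and set θ*(μ) := b − Ax*(μ). Fix an index i and assume the unit-slope bound |⟨aᵢ, θ*(λ)⟩ − ⟨aᵢ, θ*(λ̃)⟩| ≤ λ̃ − λ. If |⟨aᵢ, θ*(λ̃)⟩| < 2λ − λ̃, then |⟨aᵢ, θ*(λ)⟩| < λ and hence x*(λ)ᵢ = 0. -/

import Mathlib

open scoped RealInnerProductSpace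

set_option maxHeartbeats 1000000

/-- validity of the strong screening rule under the unit-slope bound:
let `λ̃ > λ > λ̃/2 > 0`, let `x*(λ)` and `x*(λ̃)` be Lasso minimizers with parameters
`λ` and `λ̃`, and set `θ*(μ) = b - Ax*(μ)`. If the unit-slope bound
`|⟨aᵢ, θ*(λ)⟩ - ⟨aᵢ, θ*(λ̃)⟩| ≤ λ̃ - λ` holds and `|⟨aᵢ, θ*(λ̃)⟩| < 2λ - λ̃`, then
`|⟨aᵢ, θ*(λ)⟩| < λ` and `x*(λ)ᵢ = 0`. -/
theorem lasso_strong_screening_rule {m n : ℕ}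
    (a : Fin n → EuclideanSpace ℝ (Fin m)) (b : EuclideanSpace ℝ (Fin m))
    (lam lamt : ℝ) (h1 : lam < lamt) (h2 : lamt / 2 < lam) (h3 : 0 < lamt / 2)
    (xlam xlamt : Fin n → ℝ)
    (hminlam : ∀ x : Fin n → ℝ,
      (1/2) * ‖(∑ i, xlam i • a i) - b‖^2 + lam * ∑ i, |xlam i|
        ≤ (1/2) * ‖(∑ i, x i • a i) - b‖^2 + lam * ∑ i, |x i|)
    (hminlamt : ∀ x : Fin n → ℝ,
      (1/2) * ‖(∑ i, xlamt i • a i) - b‖^2 + lamt * ∑ i, |xlamt i|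
        ≤ (1/2) * ‖(∑ i, x i • a i) - b‖^2 + lamt * ∑ i, |x i|)
    (i : Fin n)
    (hslope : |⟪a i, b - ∑ j, xlam j • a j⟫ - ⟪a i, b - ∑ j, xlamt j • a j⟫|
                ≤ lamt - lam)
    (hscreen : |⟪a i, b - ∑ j, xlamt j • a j⟫| < 2 * lam - lamt) :
    |⟪a i, b - ∑ j, xlam j • a j⟫| < lam ∧ xlam i = 0 := by
  set K : ℝ := ⟪a i, b - ∑ j, xlam j • a j⟫ with hK
  have hKlt : |K| < lam := by
    have htri : |K| ≤ |K - ⟪a i, b - ∑ j, xlamt j • a j⟫| + |⟪a i, b - ∑ j, xlamt j • a j⟫| := by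
      have := abs_add_le (K - ⟪a i, b - ∑ j, xlamt j • a j⟫) (⟪a i, b - ∑ j, xlamt j • a j⟫)
      simpa using this
    calc |K| ≤ |K - ⟪a i, b - ∑ j, xlamt j • a j⟫| + |⟪a i, b - ∑ j, xlamt j • a j⟫| := htri
      _ < (lamt - lam) + (2 * lam - lamt) := add_lt_add_of_le_of_lt hslope hscreen
      _ = lam := by ring
  refine ⟨hKlt, ?_⟩
  set v := a i with hv
  set S := (∑ j, xlam j • a j) - b with hS
  set c := xlam i with hc
  -- key inequality from optimality
  have key : ∀ t : ℝ, 0 ≤ -t * K + t^2 / 2 * ‖v‖^2 + lam * (|c + t| - |c|) := by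
    intro t
    have h := hminlam (Function.update xlam i (c + t))
    have hsum : ∑ j, (Function.update xlam i (c + t)) j • a j
        = (∑ j, xlam j • a j) + t • v := by
      have : ∀ j : Fin n, (Function.update xlam i (c + t)) j • a j
          = xlam j • a j + (if j = i then t • v else 0) := by
        intro j
        by_cases hj : j = i
        · subst hj; simp [Function.update_self, add_smul, hc, hv]
        · simp [Function.update_of_ne hj, hj]
      rw [Finset.sum_congr rfl (fun j _ => this j), Finset.sum_add_distrib,
        Finset.sum_ite_eq' Finset.univ i (fun _ => t • v)]
      simp
    have habs : ∑ j, |(Function.update xlam i (c + t)) j|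
        = (∑ j, |xlam j|) + (|c + t| - |c|) := by
      have : ∀ j : Fin n, |(Function.update xlam i (c + t)) j|
          = |xlam j| + (if j = i then |c + t| - |c| else 0) := by
        intro j
        by_cases hj : j = i
        · subst hj; simp [Function.update_self, hc]
        · simp [Function.update_of_ne hj, hj]
      rw [Finset.sum_congr rfl (fun j _ => this j), Finset.sum_add_distrib,
        Finset.sum_ite_eq' Finset.univ i (fun _ => |c + t| - |c|)]
      simp
    rw [hsum, habs] at h
    have hexp : ‖((∑ j, xlam j • a j) + t • v) - b‖^2
        = ‖S‖^2 + 2 * (t * ⟪S, v⟫) + t^2 * ‖v‖^2 := by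
      have : ((∑ j, xlam j • a j) + t • v) - b = S + t • v := by rw [hS]; abel
      rw [this, norm_add_sq_real, real_inner_smul_right, norm_smul, mul_pow,
        Real.norm_eq_abs, sq_abs]
    rw [hexp] at h
    have hKS : ⟪S, v⟫ = -K := by
      rw [hK, hS, real_inner_comm]
      rw [show (∑ j, xlam j • a j) - b = -(b - ∑ j, xlam j • a j) by abel]
      rw [inner_neg_right]
    rw [hKS] at h
    nlinarith [h]
  by_contra hne
  rcases lt_or_gt_of_ne hne with hneg | hpos
  · -- c < 0, take t = s > 0
    have hlK : 0 < lam + K := by cases abs_lt.mp hKlt; linarith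
    set s := min (-c) ((lam + K) / (‖v‖^2 + 1)) with hs
    have hs0 : 0 < s := lt_min (by linarith) (div_pos hlK (by positivity))
    have hsc : s ≤ -c := min_le_left _ _
    have habs : |c + s| - |c| = -s := by
      rw [abs_of_nonpos (by linarith), abs_of_nonpos (le_of_lt hneg)]; ring
    have h := key s
    rw [habs] at h
    have h2' : lam + K ≤ s * ‖v‖^2 / 2 := by nlinarith
    have h3' : s * (‖v‖^2 + 1) ≤ lam + K := by
      have := min_le_right (-c) ((lam + K) / (‖v‖^2 + 1))
      rw [← hs] at this
      calc s * (‖v‖^2 + 1) ≤ ((lam + K) / (‖v‖^2 + 1)) * (‖v‖^2 + 1) := by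
            apply mul_le_mul_of_nonneg_right this (by positivity)
        _ = lam + K := by field_simp
    nlinarith [mul_pos hs0 (show (0:ℝ) < ‖v‖^2 / 2 + 1 by positivity)]
  · -- c > 0, take t = -s
    have hlK : 0 < lam - K := by cases abs_lt.mp hKlt; linarith
    set s := min c ((lam - K) / (‖v‖^2 + 1)) with hs
    have hs0 : 0 < s := lt_min hpos (div_pos hlK (by positivity))
    have hsc : s ≤ c := min_le_left _ _
    have habs : |c + (-s)| - |c| = -s := by
      rw [abs_of_nonneg (by linarith), abs_of_pos hpos]; ring
    have h := key (-s)
    rw [habs] at h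
    have h2' : lam - K ≤ s * ‖v‖^2 / 2 := by nlinarith
    have h3' : s * (‖v‖^2 + 1) ≤ lam - K := by
      have := min_le_right c ((lam - K) / (‖v‖^2 + 1))
      rw [← hs] at this
      calc s * (‖v‖^2 + 1) ≤ ((lam - K) / (‖v‖^2 + 1)) * (‖v‖^2 + 1) := by
            apply mul_le_mul_of_nonneg_right this (by positivity)
        _ = lam - K := by field_simp
    nlinarith [mul_pos hs0 (show (0:ℝ) < ‖v‖^2 / 2 + 1 by positivity)]
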